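/- Let u_1, …, u_m be an orthonormal basis of ℝ^m and let 𝓘 be a random subset of {1,…,m} of size r with marginal inclusion probabilities p_j = Pr[j ∈ 𝓘], and set δ = min_{j∈[m]} p_j. Let P ∈ ℝ^{m×r} be the matrix whose columns are u_j for j ∈ 𝓘, and let G be a random matrix in ℝ^{m×n} that is independent of 𝓘. Then E[‖(I − P Pᵀ) G‖_F²] ≤ (1 − δ) · E[‖G‖_F²]. -/

import Mathlib

open Finset Matrix MeasureTheory

/-- The squared Frobenius norm of a real matrix: the sum of squares of all entries. -/
noncomputable def frobSq {a b : ℕ} (A : Matrix (Fin a) (Fin b) ℝ) : ℝ :=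
  ∑ i, ∑ j, (A i j) ^ 2

lemma frobSq_eq_sum_cols {a b : ℕ} (A : Matrix (Fin a) (Fin b) ℝ) :
    frobSq A = ∑ k, (fun i => A i k) ⬝ᵥ (fun i => A i k) := by
  unfold frobSq
  rw [Finset.sum_comm]
  simp [dotProduct, sq]

lemma mul_col {a b c : ℕ} (A : Matrix (Fin a) (Fin b) ℝ) (G : Matrix (Fin b) (Fin c) ℝ)
    (k : Fin c) : (fun i => (A * G) i k) = A.mulVec (fun i => G i k) := by
  funext i; simp [Matrix.mul_apply, Matrix.mulVec, dotProduct]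

lemma proj_dot {m r : ℕ} (P : Matrix (Fin m) (Fin r) ℝ) (hP : Pᵀ * P = 1) (x : Fin m → ℝ) :
    ((1 - P * Pᵀ).mulVec x) ⬝ᵥ ((1 - P * Pᵀ).mulVec x)
      = x ⬝ᵥ x - (Pᵀ.mulVec x) ⬝ᵥ (Pᵀ.mulVec x) := by
  set y := Pᵀ.mulVec x with hy
  have h1 : (P * Pᵀ).mulVec x = P.mulVec y := by rw [← Matrix.mulVec_mulVec]
  have h2 : (1 - P * Pᵀ).mulVec x = x - P.mulVec y := by
    rw [Matrix.sub_mulVec, Matrix.one_mulVec, h1]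
  have h3 : x ⬝ᵥ P.mulVec y = y ⬝ᵥ y := by
    rw [Matrix.dotProduct_mulVec, ← Matrix.mulVec_transpose, ← hy]
  have h4 : (P.mulVec y) ⬝ᵥ (P.mulVec y) = y ⬝ᵥ y := by
    rw [Matrix.dotProduct_mulVec, ← Matrix.mulVec_transpose, Matrix.mulVec_mulVec, hP,
      Matrix.one_mulVec]
  rw [h2, sub_dotProduct, dotProduct_sub, dotProduct_sub, h3, h4,
    dotProduct_comm (P.mulVec y) x, h3]
  ring

lemma sum_orderEmb {m r : ℕ} {S : Finset (Fin m)} (h : S.card = r) (f : Fin m → ℝ) :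
    ∑ j ∈ S, f j = ∑ c : Fin r, f (S.orderEmbOfFin h c) := by
  have himg : Finset.image (S.orderEmbOfFin h) Finset.univ = S := by
    apply Finset.coe_injective
    rw [Finset.coe_image, Finset.coe_univ, Set.image_univ]
    exact Finset.range_orderEmbOfFin S h
  have h2 := Finset.sum_image (s := Finset.univ) (g := S.orderEmbOfFin h) (f := f)
    (fun a _ b _ hab => (S.orderEmbOfFin h).injective hab)
  rw [himg] at h2
  exact h2

/-- Let `u 1, …, u m` be an orthonormal basis of `ℝ^m`, `𝓘` a random size-`r`
subset of `{1,…,m}` with marginal inclusion probabilities `p j` and `δ = min_j p j`, let `P S`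
be the matrix whose columns are `u j`, `j ∈ S`, and let `G` be a random matrix in `ℝ^{m×n}`
independent of `𝓘` (independence is modelled by the joint expectation being the product
`∑_S w S * ∫ · dμ`).  Then `E[‖(I − P Pᵀ) G‖_F²] ≤ (1 − δ) E[‖G‖_F²]`. -/
theorem stmt3 {m n r : ℕ} [NeZero m]
    {Ω : Type} [MeasurableSpace Ω] (μ : MeasureTheory.Measure Ω) [IsProbabilityMeasure μ]
    (u : Fin m → Fin m → ℝ)
    (hu : ∀ i j, u i ⬝ᵥ u j = if i = j then (1 : ℝ) else 0)
    -- `w` is the distribution of the random size-`r` subset `𝓘`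
    (w : {S : Finset (Fin m) // S.card = r} → ℝ)
    (hw0 : ∀ S, 0 ≤ w S) (hw1 : ∑ S, w S = 1)
    -- `P S` is the matrix whose columns are the vectors `u j` for `j ∈ S`
    (P : {S : Finset (Fin m) // S.card = r} → Matrix (Fin m) (Fin r) ℝ)
    (hP : ∀ S, P S = Matrix.of fun i c => u (S.1.orderEmbOfFin S.2 c) i)
    -- marginal inclusion probabilities and their minimum `δ`
    (p : Fin m → ℝ)
    (hp : ∀ j, p j = ∑ S ∈ Finset.univ.filter (fun S => j ∈ S.1), w S)
    (δ : ℝ) (hδ : δ = ⨅ j, p j)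
    -- the random matrix `G`, independent of `𝓘`
    (G : Ω → Matrix (Fin m) (Fin n) ℝ)
    (hGmeas : ∀ i j, Measurable fun ω => G ω i j)
    (hGint : Integrable (fun ω => frobSq (G ω)) μ) :
    ∑ S, w S * ∫ ω, frobSq ((1 - P S * (P S)ᵀ) * G ω) ∂μ
      ≤ (1 - δ) * ∫ ω, frobSq (G ω) ∂μ := by
  -- columns of `P S` are orthonormal
  have hPo : ∀ S : {S : Finset (Fin m) // S.card = r}, (P S)ᵀ * P S = 1 := by
    intro S
    ext c d
    have h := hu (S.1.orderEmbOfFin S.2 c) (S.1.orderEmbOfFin S.2 d)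
    simp only [Matrix.mul_apply, Matrix.transpose_apply, hP, Matrix.of_apply]
    simp only [dotProduct] at h
    rw [h]
    by_cases hcd : c = d
    · simp [hcd, Matrix.one_apply]
    · have hne : S.1.orderEmbOfFin S.2 c ≠ S.1.orderEmbOfFin S.2 d :=
        fun hc => hcd ((S.1.orderEmbOfFin S.2).injective hc)
      simp [hcd, hne, Matrix.one_apply]
  -- Parseval
  have hpars : ∀ x : Fin m → ℝ, ∑ j, (u j ⬝ᵥ x) ^ 2 = x ⬝ᵥ x := by
    intro x
    set U : Matrix (Fin m) (Fin m) ℝ := Matrix.of u with hU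
    have hUU : U * Uᵀ = 1 := by
      ext i j
      simpa [Matrix.mul_apply, dotProduct, Matrix.one_apply, hU] using hu i j
    have hUtU : Uᵀ * U = 1 := mul_eq_one_comm.mp hUU
    have hx : ∑ j, (u j ⬝ᵥ x) ^ 2 = (U.mulVec x) ⬝ᵥ (U.mulVec x) := by
      simp [dotProduct, Matrix.mulVec, sq, hU]
    rw [hx, Matrix.dotProduct_mulVec, ← Matrix.mulVec_transpose, Matrix.mulVec_mulVec, hUtU,
      Matrix.one_mulVec]
  set F : Fin m → Ω → ℝ := fun j ω => ∑ k, (u j ⬝ᵥ (fun i => G ω i k)) ^ 2 with hF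
  have hFnonneg : ∀ j ω, 0 ≤ F j ω := fun j ω =>
    Finset.sum_nonneg fun k _ => sq_nonneg _
  have hFsum : ∀ ω, ∑ j, F j ω = frobSq (G ω) := by
    intro ω
    rw [frobSq_eq_sum_cols, hF]
    rw [Finset.sum_comm]
    exact Finset.sum_congr rfl fun k _ => hpars _
  have hFmeas : ∀ j, Measurable (F j) := by
    intro j
    apply Finset.measurable_sum
    intro k _
    apply Measurable.pow_const
    simp only [dotProduct]
    exact Finset.measurable_sum _ fun i _ => measurable_const.mul (hGmeas i k)
  have hFint : ∀ j, Integrable (F j) μ := by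
    intro j
    refine hGint.mono' (hFmeas j).aestronglyMeasurable ?_
    filter_upwards with ω
    rw [Real.norm_eq_abs, abs_of_nonneg (hFnonneg j ω)]
    calc F j ω ≤ ∑ j', F j' ω :=
          Finset.single_le_sum (fun j' _ => hFnonneg j' ω) (Finset.mem_univ j)
      _ = frobSq (G ω) := hFsum ω
  -- pointwise key identity
  have hkey : ∀ (S : {S : Finset (Fin m) // S.card = r}) ω,
      frobSq ((1 - P S * (P S)ᵀ) * G ω) = frobSq (G ω) - ∑ j ∈ S.1, F j ω := by
    intro S ω
    rw [frobSq_eq_sum_cols, frobSq_eq_sum_cols]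
    simp_rw [mul_col, proj_dot (P S) (hPo S), Finset.sum_sub_distrib]
    congr 1
    rw [sum_orderEmb S.2]
    rw [Finset.sum_comm]
    refine Finset.sum_congr rfl fun k _ => ?_
    simp only [dotProduct, Matrix.mulVec, hP, Matrix.of_apply, Matrix.transpose_apply, sq, hF]
  set A : ℝ := ∫ ω, frobSq (G ω) ∂μ with hA
  set I : Fin m → ℝ := fun j => ∫ ω, F j ω ∂μ with hI
  have hInt : ∀ S : {S : Finset (Fin m) // S.card = r},
      ∫ ω, frobSq ((1 - P S * (P S)ᵀ) * G ω) ∂μ = A - ∑ j ∈ S.1, I j := by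
    intro S
    simp_rw [hkey S]
    rw [integral_sub hGint (integrable_finset_sum _ fun j _ => hFint j),
      integral_finset_sum _ fun j _ => hFint j]
  have hswap : ∑ S : {S : Finset (Fin m) // S.card = r}, w S * ∑ j ∈ S.1, I j
      = ∑ j, p j * I j := by
    have h1 : ∀ S : {S : Finset (Fin m) // S.card = r},
        w S * ∑ j ∈ S.1, I j = ∑ j, (if j ∈ S.1 then w S * I j else 0) := by
      intro S
      rw [Finset.mul_sum, Finset.sum_ite_mem, Finset.univ_inter]
    simp_rw [h1]
    rw [Finset.sum_comm]
    refine Finset.sum_congr rfl fun j _ => ?_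
    rw [← Finset.sum_filter, ← Finset.sum_mul, ← hp j]
  have hδle : ∀ j, δ ≤ p j := fun j => hδ ▸ ciInf_le (Set.Finite.bddBelow (Set.finite_range p)) j
  have hInonneg : ∀ j, 0 ≤ I j := fun j => integral_nonneg fun ω => hFnonneg j ω
  have hsumI : ∑ j, I j = A := by
    rw [hI, ← integral_finset_sum _ fun j _ => hFint j, hA]
    exact integral_congr_ae (Filter.Eventually.of_forall fun ω => hFsum ω)
  calc ∑ S, w S * ∫ ω, frobSq ((1 - P S * (P S)ᵀ) * G ω) ∂μ
      = ∑ S : {S : Finset (Fin m) // S.card = r}, w S * (A - ∑ j ∈ S.1, I j) := by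
        exact Finset.sum_congr rfl fun S _ => by rw [hInt S]
    _ = (∑ S, w S) * A - ∑ j, p j * I j := by
        rw [← hswap, Finset.sum_mul, ← Finset.sum_sub_distrib]
        exact Finset.sum_congr rfl fun S _ => by ring
    _ = A - ∑ j, p j * I j := by rw [hw1, one_mul]
    _ ≤ A - ∑ j, δ * I j := by
        have h := Finset.sum_le_sum (s := Finset.univ)
          (fun j _ => mul_le_mul_of_nonneg_right (hδle j) (hInonneg j))
        linarith
    _ = A - δ * A := by rw [← Finset.mul_sum, hsumI]
    _ = (1 - δ) * A := by ring
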